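/- Let C be a small category with a coverage τ. The class of τ-local epimorphisms in Ĉ is stable under composition if and only if the site (Ĉ, τ̂) is closed; explicitly, the latter condition says: for all τ-local epimorphisms g : Z → Y and f : Y → X there exist a τ-local epimorphism h : W → X and a morphism q : W → Z with h = f ∘ g ∘ q. -/
import Mathlib


universe u

open CategoryTheory CategoryTheory.Limits Opposite

/-- A family of morphisms `{fᵢ : cᵢ ⟶ c}` indexed by a (small) set. -/
structure CoverFamily (C : Type u) [CategoryTheory.SmallCategory C] (c : C) : Type (u + 1) where
  ι : Type u
  obj : ι → C
  map : ∀ i : ι, obj i ⟶ c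

/-- A coverage (Grothendieck pretopology) in the sense of the paper:
identity families are coverings, and coverings admit weak pullbacks. -/
structure PaperCoverage (C : Type u) [CategoryTheory.SmallCategory C] : Type (u + 1) where
  covers : ∀ c : C, Set (CoverFamily C c)
  id_mem : ∀ c : C, (⟨PUnit, fun _ => c, fun _ => 𝟙 c⟩ : CoverFamily C c) ∈ covers c
  pullback_compat : ∀ {c c' : C} (g : c' ⟶ c) (fam : CoverFamily C c), fam ∈ covers c →
    ∃ fam' ∈ covers c', ∀ j : fam'.ι, ∃ (i : fam.ι) (h : fam'.obj j ⟶ fam.obj i),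
      h ≫ fam.map i = fam'.map j ≫ g

variable {C : Type u} [SmallCategory C]

/-- A morphism `π : Y ⟶ X` of presheaves is a `τ`-local epimorphism if every
morphism `y(c) ⟶ X` admits local lifts through `π` along some covering family of `c`. -/
def IsLocalEpi (τ : PaperCoverage C) {Y X : Cᵒᵖ ⥤ Type u} (π : Y ⟶ X) : Prop :=
  ∀ (c : C) (φ : yoneda.obj c ⟶ X),
    ∃ fam ∈ τ.covers c, ∀ j : fam.ι,
      ∃ φj : yoneda.obj (fam.obj j) ⟶ Y, φj ≫ π = yoneda.map (fam.map j) ≫ φ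

/-- The τ-local epimorphisms in `Ĉ` are stable under composition if and
only if the site `(Ĉ, τ̂)` is closed, i.e. for all τ-local epimorphisms `g : Z ⟶ Y` and
`f : Y ⟶ X` there exist a τ-local epimorphism `h : W ⟶ X` and a morphism `q : W ⟶ Z`
with `h = f ∘ g ∘ q`. -/
theorem localEpi_comp_stable_iff_hat_closed (τ : PaperCoverage C) :
    (∀ {X Y Z : Cᵒᵖ ⥤ Type u} (g : Z ⟶ Y) (f : Y ⟶ X),
        IsLocalEpi τ g → IsLocalEpi τ f → IsLocalEpi τ (g ≫ f)) ↔
      (∀ {X Y Z : Cᵒᵖ ⥤ Type u} (g : Z ⟶ Y) (f : Y ⟶ X),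
        IsLocalEpi τ g → IsLocalEpi τ f →
          ∃ (W : Cᵒᵖ ⥤ Type u) (h : W ⟶ X) (q : W ⟶ Z),
            IsLocalEpi τ h ∧ h = q ≫ g ≫ f) := by
  constructor
  · intro H X Y Z g f hg hf
    exact ⟨Z, g ≫ f, 𝟙 Z, H g f hg hf, (Category.id_comp _).symm⟩
  · intro H X Y Z g f hg hf
    obtain ⟨W, h, q, hh, rfl⟩ := H g f hg hf
    intro c φ
    obtain ⟨fam, hfam, hl⟩ := hh c φ
    refine ⟨fam, hfam, fun j => ?_⟩
    obtain ⟨φj, hφj⟩ := hl j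
    exact ⟨φj ≫ q, by simpa using hφj⟩
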